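/- Every minimal prime ideal of the Anderson ring R[X]_A is of the form P·R[X]_A for some minimal prime ideal P of R, and the assignment P ↦ P·R[X]_A is a one-to-one correspondence between the minimal prime ideals of R and the minimal prime ideals of R[X]_A. -/

import Mathlib

open Polynomial

/-- The multiplicative set `A = {f ∈ R[X] : f(0) = 1}` of polynomials
with constant term `1`. -/
def andersonSubmonoid (R : Type*) [CommRing R] : Submonoid (Polynomial R) where
  carrier := {f | f.coeff 0 = 1}
  one_mem' := by simp
  mul_mem' := by
    intro a b ha hb
    simp only [Set.mem_setOf_eq, Polynomial.mul_coeff_zero] at *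
    rw [ha, hb, mul_one]

/-- The Anderson ring `R[X]_A`, the localization of `R[X]` at `A`. -/
abbrev AndersonRing (R : Type*) [CommRing R] := Localization (andersonSubmonoid R)

/-- The canonical ring homomorphism `R → R[X]_A`. -/
noncomputable def andersonMap (R : Type*) [CommRing R] : R →+* AndersonRing R :=
  (algebraMap (Polynomial R) (AndersonRing R)).comp Polynomial.C

section Aux

variable {R : Type*} [CommRing R]

lemma comap_C_map_C (P : Ideal R) :
    (P.map (Polynomial.C : R →+* R[X])).comap Polynomial.C = P := by
  ext x
  simp only [Ideal.mem_comap, Ideal.mem_map_C_iff]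
  constructor
  · intro h; simpa using h 0
  · intro hx n
    rcases eq_or_ne n 0 with rfl | hn
    · simpa using hx
    · simp [Polynomial.coeff_C, hn]

lemma disjoint_anderson {P : Ideal R} (hP : P ≠ ⊤) :
    Disjoint (andersonSubmonoid R : Set R[X]) ↑(P.map (Polynomial.C : R →+* R[X])) := by
  rw [Set.disjoint_left]
  intro f hf hfP
  rw [SetLike.mem_coe, Ideal.mem_map_C_iff] at hfP
  have h0 := hfP 0
  have hf' : f.coeff 0 = 1 := hf
  rw [hf'] at h0
  exact hP (Ideal.eq_top_iff_one _ |>.2 h0)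

/-- Minimal primes of `R[X]` come from minimal primes of `R`. -/
lemma poly_minimalPrimes_forward {Q : Ideal R[X]} (hQ : Q ∈ minimalPrimes R[X]) :
    ∃ P ∈ minimalPrimes R, Q = P.map (Polynomial.C : R →+* R[X]) := by
  rw [minimalPrimes_eq_minimals] at hQ
  haveI hQp : Q.IsPrime := hQ.1
  set P := Q.comap (Polynomial.C : R →+* R[X]) with hPdef
  haveI hPp : P.IsPrime := Ideal.comap_isPrime _ _
  have hle : P.map (Polynomial.C : R →+* R[X]) ≤ Q := Ideal.map_le_iff_le_comap.2 le_rfl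
  have hQeq : Q = P.map (Polynomial.C : R →+* R[X]) :=
    le_antisymm (hQ.2 ((Ideal.isPrime_map_C_iff_isPrime P).mpr hPp) hle) hle
  refine ⟨P, ?_, hQeq⟩
  rw [minimalPrimes_eq_minimals]
  refine ⟨hPp, fun P' hP' hP'le => ?_⟩
  have h1 : P'.map (Polynomial.C : R →+* R[X]) ≤ Q := hQeq ▸ Ideal.map_mono hP'le
  have h2 : Q ≤ P'.map (Polynomial.C : R →+* R[X]) :=
    hQ.2 ((Ideal.isPrime_map_C_iff_isPrime P').mpr hP') h1
  calc P = Q.comap Polynomial.C := rfl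
    _ ≤ (P'.map (Polynomial.C : R →+* R[X])).comap Polynomial.C := Ideal.comap_mono h2
    _ = P' := comap_C_map_C P'

/-- Extension of a minimal prime of `R` is a minimal prime of `R[X]`. -/
lemma poly_minimalPrimes_backward {P : Ideal R} (hP : P ∈ minimalPrimes R) :
    P.map (Polynomial.C : R →+* R[X]) ∈ minimalPrimes R[X] := by
  rw [minimalPrimes_eq_minimals] at hP ⊢
  haveI hPp : P.IsPrime := hP.1
  refine ⟨(Ideal.isPrime_map_C_iff_isPrime P).mpr hPp, fun Q hQ hQle => ?_⟩
  haveI := hQ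
  obtain ⟨Q', hQ', hQ'le⟩ := Ideal.exists_minimalPrimes_le (I := (⊥ : Ideal R[X])) (bot_le (a := Q))
  obtain ⟨P', hP', rfl⟩ := poly_minimalPrimes_forward hQ'
  have hP'le : P' ≤ P := by
    have := (Ideal.comap_mono (f := (Polynomial.C : R →+* R[X])) (hQ'le.trans hQle) :)
    rwa [comap_C_map_C, comap_C_map_C] at this
  rw [minimalPrimes_eq_minimals] at hP'
  have : P = P' := le_antisymm (hP.2 hP'.1 hP'le) hP'le
  exact this ▸ hQ'le

lemma anderson_map_eq (P : Ideal R) :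
    Ideal.map (andersonMap R) P =
      Ideal.map (algebraMap R[X] (AndersonRing R))
        (P.map (Polynomial.C : R →+* R[X])) := by
  rw [andersonMap, ← Ideal.map_map]

/-- Forward direction for the Anderson ring. -/
lemma anderson_minimalPrimes_forward {Q : Ideal (AndersonRing R)}
    (hQ : Q ∈ minimalPrimes (AndersonRing R)) :
    ∃ P ∈ minimalPrimes R, Q = Ideal.map (andersonMap R) P := by
  haveI hQp : Q.IsPrime := hQ.1.1
  set q := Q.comap (algebraMap R[X] (AndersonRing R)) with hq
  haveI : q.IsPrime := Ideal.comap_isPrime _ _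
  obtain ⟨q', hq', hq'le⟩ := Ideal.exists_minimalPrimes_le (I := (⊥ : Ideal R[X])) (bot_le (a := q))
  obtain ⟨P, hP, rfl⟩ := poly_minimalPrimes_forward hq'
  haveI hPp : P.IsPrime := hP.1.1
  have hdisj := disjoint_anderson (R := R) hPp.ne_top
  have hprime : (Ideal.map (algebraMap R[X] (AndersonRing R))
      (P.map (Polynomial.C : R →+* R[X]))).IsPrime :=
    IsLocalization.isPrime_of_isPrime_disjoint (andersonSubmonoid R) _ _
      ((Ideal.isPrime_map_C_iff_isPrime P).mpr hPp) hdisj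
  have hmle : Ideal.map (algebraMap R[X] (AndersonRing R))
      (P.map (Polynomial.C : R →+* R[X])) ≤ Q := by
    have := Ideal.map_mono (f := algebraMap R[X] (AndersonRing R)) hq'le
    rwa [IsLocalization.map_comap (andersonSubmonoid R) (AndersonRing R) Q] at this
  refine ⟨P, hP, ?_⟩
  rw [anderson_map_eq]
  exact le_antisymm (hQ.2 ⟨hprime, bot_le⟩ hmle) hmle

/-- Backward direction for the Anderson ring. -/
lemma anderson_minimalPrimes_backward {P : Ideal R} (hP : P ∈ minimalPrimes R) :
    Ideal.map (andersonMap R) P ∈ minimalPrimes (AndersonRing R) := by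
  haveI hPp : P.IsPrime := hP.1.1
  have hq := poly_minimalPrimes_backward hP
  haveI hqp : (P.map (Polynomial.C : R →+* R[X])).IsPrime := hq.1.1
  have hdisj := disjoint_anderson (R := R) hPp.ne_top
  have hprime : (Ideal.map (andersonMap R) P).IsPrime := by
    rw [anderson_map_eq]
    exact IsLocalization.isPrime_of_isPrime_disjoint (andersonSubmonoid R) _ _ hqp hdisj
  rw [minimalPrimes_eq_minimals]
  refine ⟨hprime, fun Q hQ hQle => ?_⟩
  haveI := hQ
  have hcle : Q.comap (algebraMap R[X] (AndersonRing R)) ≤ P.map Polynomial.C := by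
    have := (Ideal.comap_mono (f := algebraMap R[X] (AndersonRing R)) hQle :)
    rwa [anderson_map_eq,
      (show Ideal.comap (algebraMap R[X] (AndersonRing R)) _ = _ from
        IsLocalization.comap_map_of_isPrime_disjoint (andersonSubmonoid R) (AndersonRing R) hqp hdisj)] at this
  haveI : (Q.comap (algebraMap R[X] (AndersonRing R))).IsPrime := Ideal.comap_isPrime _ _
  rw [minimalPrimes_eq_minimals] at hq
  have : P.map Polynomial.C ≤ Q.comap (algebraMap R[X] (AndersonRing R)) :=
    hq.2 this hcle
  calc Ideal.map (andersonMap R) P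
      = Ideal.map (algebraMap R[X] (AndersonRing R)) (P.map Polynomial.C) := anderson_map_eq P
    _ ≤ Ideal.map (algebraMap R[X] (AndersonRing R))
        (Q.comap (algebraMap R[X] (AndersonRing R))) := Ideal.map_mono this
    _ = Q := IsLocalization.map_comap (andersonSubmonoid R) (AndersonRing R) Q

lemma anderson_comap_map {P : Ideal R} (hP : P.IsPrime) :
    (Ideal.map (andersonMap R) P).comap (andersonMap R) = P := by
  rw [anderson_map_eq, andersonMap, ← Ideal.comap_comap,
    (show Ideal.comap (algebraMap R[X] (AndersonRing R)) _ = _ from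
    IsLocalization.comap_map_of_isPrime_disjoint (andersonSubmonoid R) (AndersonRing R)
      ((Ideal.isPrime_map_C_iff_isPrime P).mpr hP) (disjoint_anderson hP.ne_top)),
    comap_C_map_C]

end Aux

/-- Every minimal prime ideal of the Anderson ring `R[X]_A` is the extension
`P·R[X]_A` of a minimal prime ideal `P` of `R`, and `P ↦ P·R[X]_A` is a
one-to-one correspondence between the minimal primes of `R` and those of `R[X]_A`. -/
theorem anderson_minimalPrimes (R : Type*) [CommRing R] :
    (∀ Q ∈ minimalPrimes (AndersonRing R),
      ∃ P ∈ minimalPrimes R, Q = Ideal.map (andersonMap R) P) ∧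
    Set.BijOn (fun P : Ideal R => Ideal.map (andersonMap R) P)
      (minimalPrimes R) (minimalPrimes (AndersonRing R)) := by
  refine ⟨fun Q hQ => anderson_minimalPrimes_forward hQ,
    fun P hP => anderson_minimalPrimes_backward hP,
    fun P hP P' hP' h => ?_,
    fun Q hQ => ?_⟩
  · have : (Ideal.map (andersonMap R) P).comap (andersonMap R)
        = (Ideal.map (andersonMap R) P').comap (andersonMap R) := by simp only at h; rw [h]
    rwa [anderson_comap_map hP.1.1, anderson_comap_map hP'.1.1] at this
  · obtain ⟨P, hP, rfl⟩ := anderson_minimalPrimes_forward hQ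
    exact ⟨P, hP, rfl⟩
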